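/- Let ℰ be a local Dirichlet form on L₂(X) with 𝟙 ∈ D(ℰ)_loc, D(ℰ) ∩ L_{∞,c}(X) a core for ℰ, and let S be the semigroup generated by the associated self-adjoint operator H. Suppose A ⊆ X is measurable with 𝟙_A ∈ D(ℰ)_loc and |||Î_{𝟙_A}||| ≤ δ^{-2} < ∞ for some δ > 0, and suppose the off-diagonal bound |(φ₁, S_t φ₂)| ≤ e^{-δ²/t} ‖φ₁‖₂‖φ₂‖₂ holds for all t > 0, φ₁ ∈ L₂(A), φ₂ ∈ L₂(A^c). Then ℰ(𝟙_A φ, 𝟙_{A^c} φ) = 0 and ℰ(φ) = ℰ(𝟙_A φ) + ℰ(𝟙_{A^c} φ) for all φ ∈ D(ℰ) with 𝟙_A φ ∈ D(ℰ). -/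

import Mathlib

open MeasureTheory ENNReal

/-- A bounded (real-valued) function. -/
def BddFun {X : Type*} (ψ : X → ℝ) : Prop := ∃ M, ∀ x, |ψ x| ≤ M

/-- `D(ℰ)_loc`: functions agreeing on every compact set with a member of the domain. -/
def DirLoc {X : Type*} [TopologicalSpace X] (D : Set (X → ℝ)) : Set (X → ℝ) :=
  {ψ | ∀ K : Set X, IsCompact K → ∃ ψ' ∈ D, ∀ x ∈ K, ψ x = ψ' x}

/-- Membership in `L_{∞,c}(X;ℝ)`: bounded with compact support. -/
def MemLinfc {X : Type*} [TopologicalSpace X] (φ : X → ℝ) : Prop :=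
  BddFun φ ∧ HasCompactSupport φ

/-- The truncated form `ℐ_ψ(φ) = ℰ(ψφ,ψ) − 2⁻¹ℰ(ψ²,φ)`. -/
noncomputable def truncI {X : Type*} (E : (X → ℝ) → (X → ℝ) → ℝ) (ψ φ : X → ℝ) : ℝ :=
  E (fun x => ψ x * φ x) ψ - 2⁻¹ * E (fun x => ψ x * ψ x) φ

open Classical in
/-- The localised truncated form `Î_ψ(φ) = ℐ_{ψ̂}(φ)` where `ψ̂ ∈ D(ℰ) ∩ L_∞` agrees
with `ψ` on the support of `φ` (well defined for local forms). -/
noncomputable def truncIhat {X : Type*} [TopologicalSpace X]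
    (E : (X → ℝ) → (X → ℝ) → ℝ) (D : Set (X → ℝ)) (ψ φ : X → ℝ) : ℝ :=
  if h : ∃ ψ', ψ' ∈ D ∧ BddFun ψ' ∧ ∀ x ∈ tsupport φ, ψ x = ψ' x
  then truncI E h.choose φ else 0

/-- The norm `|||Î_ψ||| = sup{|Î_ψ(φ)| : φ ∈ D(ℰ) ∩ L_{∞,c}(X;ℝ), ‖φ‖₁ ≤ 1}`. -/
noncomputable def truncNorm {X : Type*} [TopologicalSpace X] [MeasurableSpace X]
    (E : (X → ℝ) → (X → ℝ) → ℝ) (D : Set (X → ℝ)) (μ : Measure X)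
    (ψ : X → ℝ) : ℝ≥0∞ :=
  ⨆ (φ : X → ℝ) (_ : φ ∈ D) (_ : MemLinfc φ) (_ : eLpNorm φ 1 μ ≤ 1),
    ENNReal.ofReal |truncIhat E D ψ φ|

/-- `D₀(ℰ) = {ψ ∈ D(ℰ)_loc ∩ L_∞(X;ℝ) : |||Î_ψ||| ≤ 1}`. -/
def D0 {X : Type*} [TopologicalSpace X] [MeasurableSpace X]
    (E : (X → ℝ) → (X → ℝ) → ℝ) (D : Set (X → ℝ)) (μ : Measure X) :
    Set (X → ℝ) :=
  {ψ | ψ ∈ DirLoc D ∧ BddFun ψ ∧ truncNorm E D μ ψ ≤ 1}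

/-- `d_ψ(A;B) = ess inf_A ψ − ess sup_B ψ ∈ (−∞,∞]`, computed in `EReal` so that the
conventions for null sets match those of the paper. -/
noncomputable def dFun {X : Type*} [MeasurableSpace X] (μ : Measure X)
    (ψ : X → ℝ) (A B : Set X) : EReal :=
  essInf (fun x => (ψ x : EReal)) (μ.restrict A)
    - essSup (fun x => (ψ x : EReal)) (μ.restrict B)

/-- The set-theoretic distance `d(A;B) = sup{d_ψ(A;B) : ψ ∈ D₀(ℰ)} ∈ [0,∞]`. -/
noncomputable def setDist {X : Type*} [TopologicalSpace X] [MeasurableSpace X]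
    (E : (X → ℝ) → (X → ℝ) → ℝ) (D : Set (X → ℝ)) (μ : Measure X)
    (A B : Set X) : ℝ≥0∞ :=
  ⨆ (ψ : X → ℝ) (_ : ψ ∈ D0 E D μ) (M : ℝ) (_ : (M : EReal) ≤ dFun μ ψ A B),
    ENNReal.ofReal M

open Filter

/-- Let `ℰ` be a local Dirichlet form on `L₂(X)` with `𝟙 ∈ D(ℰ)_loc` and
`D(ℰ) ∩ L_{∞,c}(X)` a core, and `S` the semigroup generated by the associated
self-adjoint operator `H` (encoded via `ℰ(u,v) = lim_{t↓0} t⁻¹(u, (I−S_t)v)`).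
Suppose `A ⊆ X` is measurable with `𝟙_A ∈ D(ℰ)_loc`, `|||Î_{𝟙_A}||| ≤ δ⁻² < ∞`
for some `δ > 0`, and the off-diagonal bound
`|(φ₁, S_tφ₂)| ≤ e^{-δ²/t}‖φ₁‖₂‖φ₂‖₂` holds for `φ₁ ∈ L₂(A)`, `φ₂ ∈ L₂(A^c)`.
Then for all `φ ∈ D(ℰ)` with `𝟙_Aφ ∈ D(ℰ)`:
`ℰ(𝟙_Aφ, 𝟙_{A^c}φ) = 0` and `ℰ(φ) = ℰ(𝟙_Aφ) + ℰ(𝟙_{A^c}φ)`. -/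
theorem form_splits_of_offdiagonal_bound {X : Type*} [TopologicalSpace X]
    [MeasurableSpace X] (μ : Measure X)
    (D : Set (X → ℝ)) (E : (X → ℝ) → (X → ℝ) → ℝ)
    (S : ℝ → (X → ℝ) → (X → ℝ))
    (hsymm : ∀ f g, E f g = E g f)
    (haddl : ∀ f g h, E (f + g) h = E f h + E g h)
    (hsmull : ∀ (c : ℝ) (f g : X → ℝ), E (c • f) g = c * E f g)
    (hDsub : ∀ f ∈ D, ∀ g ∈ D, f - g ∈ D)
    (hD2 : ∀ f ∈ D, MemLp f 2 μ)
    (h1loc : (fun _ : X => (1 : ℝ)) ∈ DirLoc D)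
    (hcore : ∀ f ∈ D, ∀ ε > (0 : ℝ), ∃ g ∈ D, MemLinfc g ∧
      E (f - g) (f - g) + ((eLpNorm (f - g) 2 μ).toReal) ^ 2 < ε)
    (hlim : ∀ u ∈ D, ∀ v ∈ D,
      Tendsto (fun t : ℝ => t⁻¹ * ∫ x, u x * (v x - S t v x) ∂μ)
        (nhdsWithin 0 (Set.Ioi 0)) (nhds (E u v)))
    (A : Set X) (hA : MeasurableSet A)
    (δ : ℝ) (hδ : 0 < δ)
    (hAloc : A.indicator (fun _ => (1 : ℝ)) ∈ DirLoc D)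
    (hTN : truncNorm E D μ (A.indicator fun _ => (1 : ℝ))
      ≤ ENNReal.ofReal (δ⁻¹ ^ 2))
    (hbound : ∀ t : ℝ, 0 < t → ∀ φ₁ φ₂ : X → ℝ,
      MemLp φ₁ 2 μ → (∀ᵐ x ∂μ, x ∉ A → φ₁ x = 0) →
      MemLp φ₂ 2 μ → (∀ᵐ x ∂μ, x ∈ A → φ₂ x = 0) →
      |∫ x, φ₁ x * S t φ₂ x ∂μ|
        ≤ Real.exp (-δ ^ 2 / t) * (eLpNorm φ₁ 2 μ).toReal
            * (eLpNorm φ₂ 2 μ).toReal)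
    (φ : X → ℝ) (hφ : φ ∈ D) (hφA : A.indicator φ ∈ D) :
    E (A.indicator φ) (Aᶜ.indicator φ) = 0 ∧
      E φ φ = E (A.indicator φ) (A.indicator φ)
        + E (Aᶜ.indicator φ) (Aᶜ.indicator φ) := by
  set u := A.indicator φ with hu
  have hvd : Aᶜ.indicator φ = φ - u := by
    funext x
    by_cases hx : x ∈ A <;> simp [u, Set.indicator_apply, hx]
  have hvD : φ - u ∈ D := hDsub φ hφ u hφA
  have huv0 : E u (φ - u) = 0 := by
    have hlim1 := hlim u hφA (φ - u) hvD
    have key : Tendsto (fun t : ℝ => t⁻¹ * ∫ x, u x * ((φ - u) x - S t (φ - u) x) ∂μ)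
        (nhdsWithin 0 (Set.Ioi 0)) (nhds 0) := by
      have heq : ∀ t, (fun x => u x * ((φ - u) x - S t (φ - u) x))
          = fun x => -(u x * S t (φ - u) x) := by
        intro t; funext x
        have h0 : u x * (φ x - u x) = 0 := by
          by_cases hx : x ∈ A <;> simp [u, Set.indicator_apply, hx]
        have : (φ - u) x = φ x - u x := rfl
        rw [this]
        ring_nf
        ring_nf at h0
        linarith [h0]
      set C : ℝ := (eLpNorm u 2 μ).toReal * (eLpNorm (φ - u) 2 μ).toReal with hC
      have hCnn : 0 ≤ C := mul_nonneg ENNReal.toReal_nonneg ENNReal.toReal_nonneg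
      have hg : Tendsto (fun t : ℝ => t⁻¹ * Real.exp (-δ ^ 2 / t) * C)
          (nhdsWithin 0 (Set.Ioi 0)) (nhds 0) := by
        have h1 : Tendsto (fun t : ℝ => δ ^ 2 / t) (nhdsWithin 0 (Set.Ioi 0)) atTop := by
          simp only [div_eq_mul_inv]
          exact Tendsto.const_mul_atTop (pow_pos hδ 2) tendsto_inv_nhdsGT_zero
        have h2 : Tendsto (fun x : ℝ => x * Real.exp (-x)) atTop (nhds 0) := by
          have := Real.tendsto_pow_mul_exp_neg_atTop_nhds_zero 1
          simpa using this
        have h3 : Tendsto (fun t : ℝ => (δ ^ 2 / t) * Real.exp (-(δ ^ 2 / t)))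
            (nhdsWithin 0 (Set.Ioi 0)) (nhds 0) := h2.comp h1
        have h4 := (h3.const_mul ((δ ^ 2)⁻¹)).mul_const C
        rw [mul_zero, zero_mul] at h4
        refine h4.congr fun t => ?_
        have hδ2 : (δ : ℝ) ^ 2 ≠ 0 := by positivity
        field_simp
      apply squeeze_zero_norm' _ hg
      filter_upwards [self_mem_nhdsWithin] with t ht
      have ht' : (0 : ℝ) < t := ht
      have hb := hbound t ht' u (φ - u) (hD2 u hφA)
        (Filter.Eventually.of_forall fun x hx => by simp [u, Set.indicator_apply, hx])
        ((hD2 φ hφ).sub (hD2 u hφA))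
        (Filter.Eventually.of_forall fun x hx => by
          simp [u, Set.indicator_apply, hx, Pi.sub_apply])
      rw [heq t, integral_neg]
      have : ‖t⁻¹ * -∫ x, u x * S t (φ - u) x ∂μ‖
          = t⁻¹ * |∫ x, u x * S t (φ - u) x ∂μ| := by
        rw [Real.norm_eq_abs, abs_mul, abs_neg, abs_of_pos (inv_pos.mpr ht')]
      rw [this]
      calc t⁻¹ * |∫ x, u x * S t (φ - u) x ∂μ|
          ≤ t⁻¹ * (Real.exp (-δ ^ 2 / t) * (eLpNorm u 2 μ).toReal
              * (eLpNorm (φ - u) 2 μ).toReal) :=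
            mul_le_mul_of_nonneg_left hb (le_of_lt (inv_pos.mpr ht'))
        _ = t⁻¹ * Real.exp (-δ ^ 2 / t) * C := by rw [hC]; ring
    exact tendsto_nhds_unique hlim1 key
  constructor
  · rw [hvd]; exact huv0
  · have hφeq : φ = u + (φ - u) := by funext x; simp
    have hvu0 : E (φ - u) u = 0 := by rw [hsymm]; exact huv0
    calc E φ φ = E (u + (φ - u)) (u + (φ - u)) := by rw [← hφeq]
      _ = E u (u + (φ - u)) + E (φ - u) (u + (φ - u)) := haddl _ _ _
      _ = (E u u + E (φ - u) u) + (E u (φ - u) + E (φ - u) (φ - u)) := by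
          rw [hsymm u (u + (φ - u)), haddl, hsymm (φ - u) (u + (φ - u)), haddl]
      _ = E u u + E (φ - u) (φ - u) := by rw [huv0, hvu0]; ring
      _ = E (A.indicator φ) (A.indicator φ)
          + E (Aᶜ.indicator φ) (Aᶜ.indicator φ) := by rw [hvd]
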